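/- Under the Lyapunov block Arnoldi assumptions (residual R = U_{m+1} H_{m+1,m} E_m* Y U_m* + U_m Y E_m H_{m+1,m}* U_{m+1}* with Y Hermitian), the Frobenius norm of the residual is ‖R‖_F = √2 ‖H_{m+1,m} E_m* Y‖_F and the spectral norm is ‖R‖₂ = ‖H_{m+1,m} E_m* Y‖₂. -/

import Mathlib

open Matrix
open scoped ComplexOrder

noncomputable def frobNorm {m n : Type*} [Fintype m] [Fintype n] (M : Matrix m n ℂ) : ℝ :=
  Real.sqrt (∑ i, ∑ j, ‖M i j‖ ^ 2)

noncomputable def specNorm {m n : Type*} [Fintype m] [Fintype n] [DecidableEq n]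
    (M : Matrix m n ℂ) : ℝ :=
  ‖LinearMap.toContinuousLinearMap (Matrix.toEuclideanLin M)‖

/-- The block matrix `E_m = e_m ⊗ I_s`. -/
noncomputable def Em (m s : ℕ) : Matrix (Fin m × Fin s) (Fin s) ℂ :=
  fun p j => if p.1.val = m - 1 ∧ p.2 = j then 1 else 0

section Aux

open scoped InnerProductSpace
set_option linter.unusedSectionVars false

variable {p q r : Type*} [Fintype p] [Fintype q] [Fintype r]
  [DecidableEq p] [DecidableEq q] [DecidableEq r]

noncomputable def T (M : Matrix p q ℂ) : EuclideanSpace ℂ q →ₗ[ℂ] EuclideanSpace ℂ p :=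
  Matrix.toEuclideanLin M

lemma T_mul (M : Matrix p q ℂ) (N : Matrix q r ℂ) (x : EuclideanSpace ℂ r) :
    T (M * N) x = T M (T N x) := by
  simp [T, Matrix.toEuclideanLin_apply, Matrix.mulVec_mulVec]

lemma T_zero (x : EuclideanSpace ℂ q) : T (0 : Matrix p q ℂ) x = 0 := by
  simp [T]

lemma T_add (M N : Matrix p q ℂ) (x : EuclideanSpace ℂ q) :
    T (M + N) x = T M x + T N x := by
  simp [T]

lemma inner_T_conjTranspose (M : Matrix p q ℂ) (x : EuclideanSpace ℂ p) (y : EuclideanSpace ℂ q) :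
    ⟪T Mᴴ x, y⟫_ℂ = ⟪x, T M y⟫_ℂ := by
  rw [T, T, Matrix.toEuclideanLin_conjTranspose_eq_adjoint, LinearMap.adjoint_inner_left]

lemma inner_T_conjTranspose' (M : Matrix p q ℂ) (x : EuclideanSpace ℂ q) (y : EuclideanSpace ℂ p) :
    ⟪x, T Mᴴ y⟫_ℂ = ⟪T M x, y⟫_ℂ := by
  rw [T, T, Matrix.toEuclideanLin_conjTranspose_eq_adjoint, LinearMap.adjoint_inner_right]

lemma T_le_specNorm (M : Matrix p q ℂ) (x : EuclideanSpace ℂ q) :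
    ‖T M x‖ ≤ specNorm M * ‖x‖ := by
  simpa [T, specNorm] using (LinearMap.toContinuousLinearMap (Matrix.toEuclideanLin M)).le_opNorm x

lemma specNorm_nonneg (M : Matrix p q ℂ) : 0 ≤ specNorm M := norm_nonneg _

lemma specNorm_le_bound (M : Matrix p q ℂ) {c : ℝ} (hc : 0 ≤ c)
    (h : ∀ x, ‖T M x‖ ≤ c * ‖x‖) : specNorm M ≤ c := by
  refine ContinuousLinearMap.opNorm_le_bound _ hc fun x => ?_
  simpa [T] using h x

lemma specNorm_conjTranspose (M : Matrix p q ℂ) : specNorm Mᴴ = specNorm M := by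
  rw [specNorm, Matrix.toEuclideanLin_conjTranspose_eq_adjoint,
    LinearMap.adjoint_toContinuousLinearMap]
  exact ContinuousLinearMap.adjoint.norm_map _

lemma isometry_of_unitary {M : Matrix p q ℂ} (hM : Mᴴ * M = 1) (x : EuclideanSpace ℂ q) :
    ‖T M x‖ = ‖x‖ := by
  have h : ⟪T M x, T M x⟫_ℂ = ⟪x, x⟫_ℂ := by
    rw [← inner_T_conjTranspose' M x (T M x), ← T_mul, hM]
    simp [T, Matrix.toEuclideanLin_apply, Matrix.one_mulVec]
  have h2 : ‖T M x‖ ^ 2 = ‖x‖ ^ 2 := by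
    rw [← inner_self_eq_norm_sq (𝕜 := ℂ), ← inner_self_eq_norm_sq (𝕜 := ℂ), h]
  calc ‖T M x‖ = Real.sqrt (‖T M x‖ ^ 2) := (Real.sqrt_sq (norm_nonneg _)).symm
    _ = Real.sqrt (‖x‖ ^ 2) := by rw [h2]
    _ = ‖x‖ := Real.sqrt_sq (norm_nonneg _)

lemma frob_sq (M : Matrix p q ℂ) : ∑ i, ∑ j, ‖M i j‖ ^ 2 = (Mᴴ * M).trace.re := by
  have h : (Mᴴ * M).trace.re = ∑ j, ∑ i, ‖M i j‖ ^ 2 := by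
    rw [Matrix.trace]
    simp only [Matrix.diag, Matrix.mul_apply, Matrix.conjTranspose_apply, Complex.re_sum]
    congr 1; ext j; congr 1; ext i
    simp only [Complex.mul_re, Complex.star_def, Complex.conj_re, Complex.conj_im,
      Complex.sq_norm, Complex.normSq_apply]
    ring
  rw [h, Finset.sum_comm]

end Aux

set_option maxHeartbeats 1000000 in
open scoped InnerProductSpace in
/-- Cheap residual norm formulas in the Lyapunov setting:
`‖R‖_F = √2 ‖H_{m+1,m} E_m* Y‖_F` and `‖R‖₂ = ‖H_{m+1,m} E_m* Y‖₂`. -/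
theorem lyapunov_residual_norms {n m s : ℕ} (hm : 0 < m)
    (Um : Matrix (Fin n) (Fin m × Fin s) ℂ) (U1 : Matrix (Fin n) (Fin s) ℂ)
    (Y : Matrix (Fin m × Fin s) (Fin m × Fin s) ℂ)
    (H1 : Matrix (Fin s) (Fin s) ℂ)
    (R : Matrix (Fin n) (Fin n) ℂ)
    (hUm : Umᴴ * Um = 1) (hU1 : U1ᴴ * U1 = 1) (hUorth : U1ᴴ * Um = 0)
    (hYh : Y.IsHermitian)
    (hR : R = U1 * H1 * (Em m s)ᴴ * Y * Umᴴ + Um * Y * (Em m s) * H1ᴴ * U1ᴴ) :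
    frobNorm R = Real.sqrt 2 * frobNorm (H1 * (Em m s)ᴴ * Y)
      ∧ specNorm R = specNorm (H1 * (Em m s)ᴴ * Y) := by
  set B : Matrix (Fin s) (Fin m × Fin s) ℂ := H1 * (Em m s)ᴴ * Y with hB
  set C : Matrix (Fin n) (Fin n) ℂ := U1 * H1 * (Em m s)ᴴ * Y * Umᴴ with hC
  have hBH : Bᴴ = Y * (Em m s) * H1ᴴ := by
    rw [hB]
    simp [Matrix.conjTranspose_mul, hYh.eq, Matrix.mul_assoc]
  have hCH : Cᴴ = Um * Y * (Em m s) * H1ᴴ * U1ᴴ := by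
    rw [hC]
    simp [Matrix.conjTranspose_mul, hYh.eq, Matrix.mul_assoc]
  have hR' : R = C + Cᴴ := by rw [hR, hCH]
  have h0 : Umᴴ * U1 = 0 := by
    have h := congrArg Matrix.conjTranspose hUorth
    simpa [Matrix.conjTranspose_mul] using h
  have hU1U1 : ∀ {k : Type} [Fintype k] (Z : Matrix (Fin s) k ℂ), U1ᴴ * (U1 * Z) = Z := by
    intro k _ Z; rw [← Matrix.mul_assoc, hU1, Matrix.one_mul]
  have hUmUm : ∀ {k : Type} [Fintype k] (Z : Matrix (Fin m × Fin s) k ℂ),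
      Umᴴ * (Um * Z) = Z := by
    intro k _ Z; rw [← Matrix.mul_assoc, hUm, Matrix.one_mul]
  have hUmU1 : ∀ {k : Type} [Fintype k] (Z : Matrix (Fin s) k ℂ), Umᴴ * (U1 * Z) = 0 := by
    intro k _ Z; rw [← Matrix.mul_assoc, h0, Matrix.zero_mul]
  have hU1Um : ∀ {k : Type} [Fintype k] (Z : Matrix (Fin m × Fin s) k ℂ),
      U1ᴴ * (Um * Z) = 0 := by
    intro k _ Z; rw [← Matrix.mul_assoc, hUorth, Matrix.zero_mul]
  have hC2 : C = U1 * (B * Umᴴ) := by rw [hC, hB]; simp [Matrix.mul_assoc]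
  have hCH2 : Cᴴ = Um * (Bᴴ * U1ᴴ) := by rw [hCH, hBH]; simp [Matrix.mul_assoc]
  have hCC : C * C = 0 := by
    rw [hC2]
    simp only [Matrix.mul_assoc]
    rw [hUmU1]
    simp
  have hCHC : Cᴴ * C = Um * (Bᴴ * B) * Umᴴ := by
    rw [hCH2, hC2]
    simp only [Matrix.mul_assoc]
    rw [hU1U1]
  have hCCH : C * Cᴴ = U1 * (B * Bᴴ) * U1ᴴ := by
    rw [hCH2, hC2]
    simp only [Matrix.mul_assoc]
    rw [hUmUm]
  -- Frobenius part
  have htr : (Rᴴ * R).trace = 2 * (Bᴴ * B).trace := by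
    have hRH : Rᴴ = R := by rw [hR']; simp [Matrix.conjTranspose_add, add_comm]
    have hCHCH : Cᴴ * Cᴴ = 0 := by
      rw [← Matrix.conjTranspose_mul, hCC, Matrix.conjTranspose_zero]
    have expand : (C + Cᴴ) * (C + Cᴴ) = C * C + C * Cᴴ + (Cᴴ * C + Cᴴ * Cᴴ) := by
      rw [Matrix.add_mul, Matrix.mul_add, Matrix.mul_add]
    rw [hRH, hR', expand, hCC, hCHCH]
    have t1 : (C * Cᴴ).trace = (B * Bᴴ).trace := by
      rw [hCCH, Matrix.trace_mul_comm, hU1U1]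
    have t2 : (Cᴴ * C).trace = (Bᴴ * B).trace := by
      rw [hCHC, Matrix.trace_mul_comm, hUmUm]
    rw [Matrix.trace_add, Matrix.trace_add, Matrix.trace_add, t1, t2,
      Matrix.trace_mul_comm B Bᴴ]
    simp
    ring
  have hfrob : frobNorm R = Real.sqrt 2 * frobNorm B := by
    rw [frobNorm, frobNorm, frob_sq, frob_sq, htr]
    have h2 : ((2 : ℂ) * (Bᴴ * B).trace).re = 2 * ((Bᴴ * B).trace).re := by
      simp [Complex.mul_re]
    rw [h2, Real.sqrt_mul (by norm_num)]
  -- Spectral part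
  have hU1iso : ∀ x, ‖T U1 x‖ = ‖x‖ := fun x => isometry_of_unitary hU1 x
  have hUmiso : ∀ x, ‖T Um x‖ = ‖x‖ := fun x => isometry_of_unitary hUm x
  have horth : ∀ (u : EuclideanSpace ℂ (Fin s)) (v : EuclideanSpace ℂ (Fin m × Fin s)),
      ⟪T U1 u, T Um v⟫_ℂ = 0 := by
    intro u v
    rw [← inner_T_conjTranspose' U1 u (T Um v), ← T_mul, hUorth, T_zero, inner_zero_right]
  have horth2 : ∀ (v : EuclideanSpace ℂ (Fin m × Fin s)) (u : EuclideanSpace ℂ (Fin s)),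
      ⟪T Um v, T U1 u⟫_ℂ = 0 := by
    intro v u
    rw [← inner_conj_symm, horth, map_zero]
  have hup : specNorm R ≤ specNorm B := by
    apply specNorm_le_bound _ (specNorm_nonneg B)
    intro x
    set a : EuclideanSpace ℂ (Fin m × Fin s) := T Umᴴ x with ha
    set b : EuclideanSpace ℂ (Fin s) := T U1ᴴ x with hb
    have hRx : T R x = T U1 (T B a) + T Um (T Bᴴ b) := by
      rw [hR', T_add, hCH2, hC2]
      simp only [T_mul]
      rfl
    -- ‖a‖² + ‖b‖² ≤ ‖x‖²
    have nab : ‖a‖ ^ 2 + ‖b‖ ^ 2 ≤ ‖x‖ ^ 2 := by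
      set pv : EuclideanSpace ℂ (Fin n) := T Um a + T U1 b with hpv
      have hre : RCLike.re ⟪pv, x⟫_ℂ = ‖a‖ ^ 2 + ‖b‖ ^ 2 := by
        rw [hpv, inner_add_left]
        rw [← inner_T_conjTranspose' Um a x, ← inner_T_conjTranspose' U1 b x, ← ha, ← hb]
        rw [inner_self_eq_norm_sq_to_K (𝕜 := ℂ), inner_self_eq_norm_sq_to_K (𝕜 := ℂ)]
        simp [← Complex.ofReal_pow]
      have hpn : ‖pv‖ ^ 2 = ‖a‖ ^ 2 + ‖b‖ ^ 2 := by
        have h := @norm_add_sq ℂ _ _ _ _ (T Um a) (T U1 b)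
        rw [horth2] at h
        rw [hpv, h, hUmiso, hU1iso]
        simp
      have hcs : RCLike.re ⟪pv, x⟫_ℂ ≤ ‖pv‖ * ‖x‖ := re_inner_le_norm _ _
      rw [hre] at hcs
      nlinarith [sq_nonneg (‖pv‖ - ‖x‖), norm_nonneg pv, norm_nonneg x, hpn, hcs]
    have hsq : ‖T R x‖ ^ 2 = ‖T B a‖ ^ 2 + ‖T Bᴴ b‖ ^ 2 := by
      have h := @norm_add_sq ℂ _ _ _ _ (T U1 (T B a)) (T Um (T Bᴴ b))
      rw [horth] at h
      rw [hRx, h, hU1iso, hUmiso]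
      simp
    have hBa : ‖T B a‖ ≤ specNorm B * ‖a‖ := T_le_specNorm B a
    have hBb : ‖T Bᴴ b‖ ≤ specNorm B * ‖b‖ := by
      have h := T_le_specNorm Bᴴ b
      rwa [specNorm_conjTranspose] at h
    have hfin : ‖T R x‖ ^ 2 ≤ (specNorm B * ‖x‖) ^ 2 := by
      have e1 := pow_le_pow_left₀ (norm_nonneg (T B a)) hBa 2
      have e2 := pow_le_pow_left₀ (norm_nonneg (T Bᴴ b)) hBb 2
      have e3 : specNorm B ^ 2 * (‖a‖ ^ 2 + ‖b‖ ^ 2) ≤ specNorm B ^ 2 * ‖x‖ ^ 2 :=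
        mul_le_mul_of_nonneg_left nab (by positivity)
      nlinarith [e1, e2, e3]
    calc ‖T R x‖ = Real.sqrt (‖T R x‖ ^ 2) := (Real.sqrt_sq (norm_nonneg _)).symm
      _ ≤ Real.sqrt ((specNorm B * ‖x‖) ^ 2) := Real.sqrt_le_sqrt hfin
      _ = specNorm B * ‖x‖ :=
          Real.sqrt_sq (mul_nonneg (specNorm_nonneg B) (norm_nonneg x))
  have hlow : specNorm B ≤ specNorm R := by
    apply specNorm_le_bound _ (specNorm_nonneg R)
    intro y
    have hRUm : R * Um = U1 * B := by
      rw [hR', Matrix.add_mul, hCH2, hC2]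
      simp only [Matrix.mul_assoc]
      rw [hUm, hUorth]
      simp
    calc ‖T B y‖ = ‖T U1 (T B y)‖ := (hU1iso _).symm
      _ = ‖T R (T Um y)‖ := by
          have he : T U1 (T B y) = T R (T Um y) := by
            rw [← T_mul, ← T_mul, hRUm]
          rw [he]
      _ ≤ specNorm R * ‖T Um y‖ := T_le_specNorm R _
      _ = specNorm R * ‖y‖ := by rw [hUmiso]
  exact ⟨hfrob, le_antisymm hup hlow⟩
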